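/- Let G be a connected graph whose cycles are pairwise vertex-disjoint, let C be a cycle of G with k vertices, and remove all edges of C from G. Then the resulting graph has exactly k connected components, each containing exactly one vertex of C. -/
import Mathlib


open SimpleGraph

/-- `v` is a leaf of the (unrooted) graph `G`: it has exactly one neighbor. -/
def IsLeafG {V : Type*} (G : SimpleGraph V) (v : V) : Prop := (G.neighborSet v).ncard = 1

/-- `G` displays the quartet tree `uv|xy`: some edge of `G` separates `{u,v}` from `{x,y}`. -/
def Displays {V : Type*} (G : SimpleGraph V) (u v x y : V) : Prop :=
  ∃ e ∈ G.edgeSet, (G.deleteEdges {e}).Reachable u v ∧ (G.deleteEdges {e}).Reachable x y ∧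
    ¬ (G.deleteEdges {e}).Reachable u x

/-- `g` is a convex extension of the leaf labeling `f` (restricted to the leaves, given by
the predicate `leafP`) on `G`: `g` agrees with `f` on leaves and each state class of `g`
induces a connected subgraph. -/
def ConvexExtP {V S : Type*} (G : SimpleGraph V) (leafP : V → Prop) (f g : V → S) : Prop :=
  (∀ v, leafP v → g v = f v) ∧
    ∀ s : S, (g ⁻¹' {s}).Nonempty → (G.induce (g ⁻¹' {s})).Connected

/-- The leaf labeling `f` is convex (homoplasy-free) on `G`. -/
def ConvexOnP {V S : Type*} (G : SimpleGraph V) (leafP : V → Prop) (f : V → S) : Prop :=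
  ∃ g, ConvexExtP G leafP f g

/-- The cycles of `G` are pairwise vertex-disjoint: any two cycles that share a vertex are the
same cycle (i.e., have the same edge set). -/
def CyclesVertexDisjoint {V : Type*} (G : SimpleGraph V) : Prop :=
  ∀ {u v : V} (c₁ : G.Walk u u) (c₂ : G.Walk v v), c₁.IsCycle → c₂.IsCycle →
    (∃ w, w ∈ c₁.support ∧ w ∈ c₂.support) → ∀ e, e ∈ c₁.edges ↔ e ∈ c₂.edges


private lemma stmt6_no_two {V : Type*} {G : SimpleGraph V}
    (hdisj : CyclesVertexDisjoint G)
    {r : V} (c : G.Walk r r) (hc : c.IsCycle) {u u' : V}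
    (hu : u ∈ c.support) (hu' : u' ∈ c.support)
    (h : (G.deleteEdges {e | e ∈ c.edges}).Reachable u u') : u = u' := by
  classical
  by_contra hne
  obtain ⟨q0⟩ := h
  set G' := G.deleteEdges {e | e ∈ c.edges} with hG'
  set p : G'.Walk u u' := (q0.toPath : G'.Walk u u') with hp
  have hpath : p.IsPath := q0.toPath.2
  have hnn : ¬ p.Nil := by
    intro hn
    exact hne (Walk.Nil.eq hn)
  obtain ⟨x, hadj, t, hpt⟩ := Walk.not_nil_iff.mp hnn
  have he0G : G.Adj u x ∧ s(u,x) ∉ {e | e ∈ c.edges} := deleteEdges_adj.mp hadj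
  have he0nc : s(u,x) ∉ c.edges := he0G.2
  set G2 := G.deleteEdges {s(u,x)} with hG2
  have ht2 : ∀ e ∈ t.edges, e ∈ G2.edgeSet := by
    intro e he
    rw [hG2, edgeSet_deleteEdges]
    constructor
    · have := t.edges_subset_edgeSet he
      rw [hG', edgeSet_deleteEdges] at this
      exact this.1
    · intro hmem
      have hnodup : p.edges.Nodup := hpath.isTrail.edges_nodup
      rw [hpt, Walk.edges_cons] at hnodup
      simp only [Set.mem_singleton_iff] at hmem
      subst hmem
      exact (List.nodup_cons.mp hnodup).1 he
  have hcyc2 : ∀ y ∈ c.support, G2.Reachable y r := by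
    intro y hy
    refine ⟨(c.dropUntil y hy).transfer G2 ?_⟩
    intro e he
    have hec : e ∈ c.edges := c.edges_dropUntil_subset hy he
    rw [hG2, edgeSet_deleteEdges]
    refine ⟨c.edges_subset_edgeSet hec, ?_⟩
    simp only [Set.mem_singleton_iff]
    rintro rfl; exact he0nc hec
  have hreach2 : G2.Reachable u x := by
    refine Reachable.symm (Reachable.trans ⟨t.transfer G2 ht2⟩ ?_)
    exact (hcyc2 u' hu').trans (hcyc2 u hu).symm
  obtain ⟨v0, W, hW, heW⟩ := adj_and_reachable_delete_edges_iff_exists_cycle.mp ⟨he0G.1, hreach2⟩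
  have huW : u ∈ W.support := W.fst_mem_support_of_mem_edges heW
  exact he0nc ((hdisj c W hc hW ⟨u, hu, huW⟩ s(u,x)).mpr heW)

private lemma stmt6_exists_reach {V : Type*} {G : SimpleGraph V}
    {r : V} (c : G.Walk r r) :
    ∀ {w y : V}, G.Walk w y → y ∈ c.support →
      ∃ u ∈ c.support, (G.deleteEdges {e | e ∈ c.edges}).Reachable w u := by
  intro w y p
  induction p with
  | nil => exact fun hy => ⟨_, hy, Reachable.refl _⟩
  | @cons a b _ hab q ih =>
    intro hy
    by_cases ha : a ∈ c.support
    · exact ⟨a, ha, Reachable.refl a⟩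
    · obtain ⟨u, hu, hr⟩ := ih hy
      have : s(a,b) ∉ c.edges := fun hmem => ha (c.fst_mem_support_of_mem_edges hmem)
      exact ⟨u, hu, (Adj.reachable (deleteEdges_adj.mpr ⟨hab, this⟩)).trans hr⟩

/-- Let `G` be connected with pairwise vertex-disjoint cycles and let `c` be a
cycle with `k` vertices.  After removing the edges of `c`, every vertex of `G` can reach
exactly one vertex of the cycle: the components are in bijection with the `k` cycle vertices
(so there are exactly `k` components, each containing exactly one vertex of the cycle). -/
theorem stmt6 {V : Type*} (G : SimpleGraph V) (hconn : G.Connected)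
    (hdisj : CyclesVertexDisjoint G)
    {r : V} (c : G.Walk r r) (hc : c.IsCycle) (k : ℕ) (hk : c.support.tail.length = k) :
    {u | u ∈ c.support}.ncard = k ∧
    ∀ w : V, ∃! u : V, u ∈ c.support ∧
      (G.deleteEdges {e | e ∈ c.edges}).Reachable w u := by
  classical
  constructor
  · have hset : {u | u ∈ c.support} = {u | u ∈ c.support.tail} := by
      have hr : r ∈ c.support.tail := by
        have hnn : ¬ c.Nil := hc.not_nil
        obtain ⟨x, h, q, rfl⟩ := Walk.not_nil_iff.mp hnn
        simpa using q.end_mem_support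
      ext u
      simp only [Set.mem_setOf_eq]
      constructor
      · intro h
        rw [c.support_eq_cons] at h
        rcases List.mem_cons.mp h with rfl | h
        · exact hr
        · exact h
      · intro h
        rw [c.support_eq_cons]
        exact List.mem_cons_of_mem _ h
    rw [hset]
    have : {u | u ∈ c.support.tail} = ↑c.support.tail.toFinset := by
      ext u; simp
    rw [this, Set.ncard_coe_finset, List.toFinset_card_of_nodup hc.2, hk]
  · intro w
    obtain ⟨u, hu, hr⟩ :=
      stmt6_exists_reach c ((hconn w r).some) c.start_mem_support
    refine ⟨u, ⟨hu, hr⟩, ?_⟩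
    rintro y ⟨hy, hyr⟩
    exact stmt6_no_two hdisj c hc hy hu (hyr.symm.trans hr)
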